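/- Let E be a Banach space and B : E × E → E a continuous bilinear map for which there exists η > 0 with ‖B(x,y)‖ ≤ η‖x‖‖y‖ for all x, y ∈ E. Then for every y ∈ E with ‖y‖ ≤ 1/(4η), the equation x = y − B(x,x) has a unique solution x̄ ∈ E satisfying ‖x̄‖ ≤ 1/(2η). -/

import Mathlib

open Metric Set Filter Topology

lemma quad_diff_est {E : Type*} [NormedAddCommGroup E] [NormedSpace ℝ E]
    (B : E →L[ℝ] E →L[ℝ] E) (η : ℝ)
    (hB : ∀ x y : E, ‖B x y‖ ≤ η * ‖x‖ * ‖y‖)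
    {u v a b : E} (hu : u = a - B u u) (hv : v = b - B v v) :
    ‖u - v‖ ≤ ‖a - b‖ + η * (‖u‖ + ‖v‖) * ‖u - v‖ := by
  have hid : B u u - B v v = B u (u - v) + B (u - v) v := by
    simp [map_sub, ContinuousLinearMap.sub_apply]
    try abel
  have h1 : u - v = (a - b) - (B u (u - v) + B (u - v) v) := by
    rw [← hid]
    calc u - v = (a - B u u) - (b - B v v) := by rw [← hu, ← hv]
      _ = (a - b) - (B u u - B v v) := by abel
  calc ‖u - v‖ = ‖(a - b) - (B u (u - v) + B (u - v) v)‖ := by rw [← h1]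
    _ ≤ ‖a - b‖ + ‖B u (u - v) + B (u - v) v‖ := norm_sub_le _ _
    _ ≤ ‖a - b‖ + (η * ‖u‖ * ‖u - v‖ + η * ‖u - v‖ * ‖v‖) := by
        gcongr
        exact (norm_add_le _ _).trans (add_le_add (hB _ _) (hB _ _))
    _ = ‖a - b‖ + η * (‖u‖ + ‖v‖) * ‖u - v‖ := by ring

lemma quad_exists {E : Type*} [NormedAddCommGroup E] [NormedSpace ℝ E] [CompleteSpace E]
    (B : E →L[ℝ] E →L[ℝ] E) (η : ℝ) (hη : 0 < η)
    (hB : ∀ x y : E, ‖B x y‖ ≤ η * ‖x‖ * ‖y‖)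
    (ε : ℝ) (hε0 : 0 < ε) (hε1 : ε ≤ 1)
    (y : E) (hy : ‖y‖ ≤ (1 - ε ^ 2) / (4 * η)) :
    ∃ x : E, x = y - B x x ∧ ‖x‖ ≤ (1 - ε) / (2 * η) := by
  set r : ℝ := (1 - ε) / (2 * η) with hr
  have hr0 : 0 ≤ r := div_nonneg (by linarith) (by linarith)
  set Φ : E → E := fun x => y - B x x with hΦ
  have hmaps : MapsTo Φ (closedBall (0:E) r) (closedBall (0:E) r) := by
    intro x hx
    rw [mem_closedBall, dist_zero_right] at *
    calc ‖Φ x‖ ≤ ‖y‖ + ‖B x x‖ := norm_sub_le _ _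
      _ ≤ (1 - ε ^ 2) / (4 * η) + η * ‖x‖ * ‖x‖ := add_le_add hy (hB _ _)
      _ ≤ (1 - ε ^ 2) / (4 * η) + η * r * r := by
          have := norm_nonneg x; gcongr
      _ ≤ r := by
          have heq : (1 - ε ^ 2) / (4 * η) + η * r * r = r := by
            rw [hr]; field_simp; ring
          linarith
  set K : NNReal := Real.toNNReal (1 - ε) with hK
  have hKc : (K : ℝ) = 1 - ε := Real.coe_toNNReal _ (by linarith)
  have hlip : LipschitzOnWith K Φ (closedBall (0:E) r) := by
    rw [lipschitzOnWith_iff_dist_le_mul]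
    intro u hu v hv
    rw [mem_closedBall, dist_zero_right] at hu hv
    rw [dist_eq_norm, dist_eq_norm]
    have hid : Φ u - Φ v = -(B u (u - v) + B (u - v) v) := by
      simp only [hΦ, map_sub, ContinuousLinearMap.sub_apply]; abel
    rw [hid, norm_neg]
    calc ‖B u (u - v) + B (u - v) v‖ ≤ η * ‖u‖ * ‖u - v‖ + η * ‖u - v‖ * ‖v‖ :=
          (norm_add_le _ _).trans (add_le_add (hB _ _) (hB _ _))
      _ ≤ η * r * ‖u - v‖ + η * ‖u - v‖ * r := by
          have := norm_nonneg (u - v); gcongr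
      _ ≤ (K : ℝ) * ‖u - v‖ := by
          rw [hKc, hr]
          have := norm_nonneg (u - v)
          have h2η : (0:ℝ) < 2 * η := by linarith
          have : η * ((1 - ε) / (2 * η)) = (1 - ε) / 2 := by field_simp
          rw [this]; nlinarith
  have hcontr : ContractingWith K (hmaps.restrict Φ _ _) := by
    constructor
    · rw [← NNReal.coe_lt_coe, hKc]; norm_num; linarith
    · exact hlip.mapsToRestrict hmaps
  obtain ⟨x, hxs, hfix, -, -⟩ := hcontr.exists_fixedPoint'
    (isClosed_closedBall.isComplete) hmaps
    (mem_closedBall_self hr0) (edist_ne_top _ _)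
  refine ⟨x, hfix.symm, ?_⟩
  rwa [mem_closedBall, dist_zero_right] at hxs

/-- solvability of the quadratic equation `x = y - B(x,x)` in a Banach space,
with uniqueness in the ball `‖x‖ ≤ 1/(2η)`, provided `‖y‖ ≤ 1/(4η)`. -/
theorem stmt6 {E : Type*} [NormedAddCommGroup E] [NormedSpace ℝ E] [CompleteSpace E]
    (B : E →L[ℝ] E →L[ℝ] E) (η : ℝ) (hη : 0 < η)
    (hB : ∀ x y : E, ‖B x y‖ ≤ η * ‖x‖ * ‖y‖)
    (y : E) (hy : ‖y‖ ≤ 1 / (4 * η)) :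
    ∃! x : E, x = y - B x x ∧ ‖x‖ ≤ 1 / (2 * η) := by
  have hy0 : 0 ≤ ‖y‖ := norm_nonneg y
  set ε : ℕ → ℝ := fun k => 1 / Real.sqrt (k + 1) with hε
  have hsq : ∀ k : ℕ, (0:ℝ) < Real.sqrt ((k:ℝ) + 1) := fun k =>
    Real.sqrt_pos.2 (by positivity)
  have hε0 : ∀ k, 0 < ε k := fun k => by
    simp only [hε]; exact div_pos one_pos (hsq k)
  have hsq1 : ∀ k : ℕ, (1:ℝ) ≤ Real.sqrt ((k:ℝ) + 1) := fun k => by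
    nlinarith [Real.sq_sqrt (show (0:ℝ) ≤ (k:ℝ)+1 by positivity),
      Real.sqrt_nonneg ((k:ℝ)+1), Nat.cast_nonneg (α := ℝ) k, hsq k]
  have hε1 : ∀ k, ε k ≤ 1 := fun k => by
    simp only [hε]
    rw [div_le_one (hsq k)]
    exact hsq1 k
  have hεsq : ∀ k : ℕ, (ε k) ^ 2 = 1 / ((k:ℝ) + 1) := fun k => by
    simp only [hε]
    rw [div_pow, one_pow, Real.sq_sqrt (by positivity)]
  have hεanti : ∀ k : ℕ, ε (k + 1) ≤ ε k := fun k => by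
    simp only [hε]
    apply one_div_le_one_div_of_le (hsq k)
    push_cast
    exact Real.sqrt_le_sqrt (by linarith)
  have hεsucc : ∀ k : ℕ, ε (k+1) = 1 / Real.sqrt ((k:ℝ) + 2) := fun k => by
    simp only [hε]
    norm_num [show ((k:ℝ)+1)+1 = (k:ℝ)+2 by ring]
  set c : ℕ → ℝ := fun k => 1 - 1 / ((k:ℝ) + 1) with hc
  have hc01 : ∀ k : ℕ, 0 ≤ c k ∧ c k ≤ 1 := fun k => by
    have h1 : (0:ℝ) < (k:ℝ) + 1 := by positivity
    have h2 : (1:ℝ) / ((k:ℝ) + 1) ≤ 1 := by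
      rw [div_le_one h1]; linarith [Nat.cast_nonneg (α := ℝ) k]
    have h3 : (0:ℝ) < 1 / ((k:ℝ) + 1) := by positivity
    exact ⟨by simp only [hc]; linarith, by simp only [hc]; linarith⟩
  have hcy : ∀ k : ℕ, ‖(c k) • y‖ = c k * ‖y‖ := fun k => by
    rw [norm_smul, Real.norm_eq_abs, abs_of_nonneg (hc01 k).1]
  -- the approximating solutions
  have H : ∀ k : ℕ, ∃ x : E, x = (c k) • y - B x x ∧ ‖x‖ ≤ (1 - ε k) / (2 * η) := by
    intro k
    apply quad_exists B η hη hB (ε k) (hε0 k) (hε1 k)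
    rw [hεsq k, hcy k]
    calc c k * ‖y‖ ≤ c k * (1/(4*η)) := by
          have := (hc01 k).1; gcongr
      _ = (1 - 1/((k:ℝ)+1)) / (4*η) := by simp only [hc]; ring
  choose x hxeq hxnorm using H
  -- basic norm bound
  have hxb : ∀ k, ‖x k‖ ≤ 1 / (2 * η) := fun k => by
    have h1 := hxnorm k
    have h2 := hε0 k
    have : (1 - ε k) / (2*η) ≤ 1 / (2*η) := by gcongr; linarith
    linarith
  -- Cauchy estimate
  have hdist : ∀ k : ℕ, dist (x k) (x (k+1)) ≤ ‖y‖ / (((k:ℝ)+1) * Real.sqrt ((k:ℝ)+2)) := by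
    intro k
    have hest := quad_diff_est B η hB (hxeq (k+1)) (hxeq k)
    have hΔ : ‖(c (k+1)) • y - (c k) • y‖ = ‖y‖ / (((k:ℝ)+1) * ((k:ℝ)+2)) := by
      rw [← sub_smul, norm_smul, Real.norm_eq_abs]
      simp only [hc]
      push_cast
      rw [show (1 - 1 / ((k:ℝ) + 1 + 1)) - (1 - 1 / ((k:ℝ) + 1))
          = 1/(((k:ℝ)+1) * ((k:ℝ)+2)) by field_simp; ring]
      rw [abs_of_nonneg (by positivity)]
      ring
    rw [dist_eq_norm, norm_sub_rev]
    set d := ‖x (k+1) - x k‖ with hd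
    have hd0 : 0 ≤ d := norm_nonneg _
    have hS : η * (‖x (k+1)‖ + ‖x k‖) ≤ 1 - ε (k+1) := by
      have h1 := hxnorm (k+1)
      have h2 := hxnorm k
      have h3 := hεanti k
      have h4 : η * ((1 - ε (k+1)) / (2*η) + (1 - ε k) / (2*η))
          = (1 - ε (k+1))/2 + (1 - ε k)/2 := by field_simp
      nlinarith [norm_nonneg (x (k+1)), norm_nonneg (x k)]
    have hkey : ε (k+1) * d ≤ ‖y‖ / (((k:ℝ)+1) * ((k:ℝ)+2)) := by
      rw [hΔ] at hest
      nlinarith [mul_le_mul_of_nonneg_right hS hd0]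
    set s := Real.sqrt ((k:ℝ)+2) with hs
    have hs0 : 0 < s := Real.sqrt_pos.2 (by positivity)
    have hss : s * s = (k:ℝ)+2 := Real.mul_self_sqrt (by positivity)
    rw [hεsucc k, ← hs] at hkey
    have hk1 : (0:ℝ) < (k:ℝ) + 1 := by positivity
    rw [le_div_iff₀ (by positivity)]
    -- from hkey : (1/s) * d ≤ ‖y‖ / ((k+1)*(k+2))
    have hkey' : d * (((k:ℝ)+1) * ((k:ℝ)+2)) ≤ ‖y‖ * s := by
      rw [div_mul_eq_mul_div, one_mul, div_le_div_iff₀ hs0 (by positivity)] at hkey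
      linarith
    nlinarith
  -- summable bound
  have hsummable : Summable (fun k : ℕ => ‖y‖ / (((k:ℝ)+1) * Real.sqrt ((k:ℝ)+2))) := by
    have hbig : Summable (fun k : ℕ => ‖y‖ * ((k:ℝ)+1) ^ (-(3/2) : ℝ)) := by
      apply Summable.mul_left
      have h0 : Summable (fun n : ℕ => (n:ℝ) ^ (-(3/2) : ℝ)) :=
        (Real.summable_nat_rpow).2 (by norm_num)
      have := h0.comp_injective Nat.succ_injective
      refine this.congr fun k => ?_
      simp only [Function.comp, Nat.succ_eq_add_one]
      push_cast
      ring_nf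
    apply Summable.of_nonneg_of_le (fun k => by positivity) (fun k => ?_) hbig
    have hk1 : (0:ℝ) < (k:ℝ) + 1 := by positivity
    have hrw : ((k:ℝ)+1) ^ (-(3/2) : ℝ) = 1 / (((k:ℝ)+1) * Real.sqrt ((k:ℝ)+1)) := by
      rw [Real.rpow_neg (by positivity), show (3/2 : ℝ) = 1 + 1/2 by norm_num,
        Real.rpow_add hk1, Real.rpow_one, ← Real.sqrt_eq_rpow, one_div]
    rw [hrw, mul_one_div]
    gcongr
    · norm_num
  -- limit
  have hcauchy : CauchySeq x := cauchySeq_of_dist_le_of_summable _ hdist hsummable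
  obtain ⟨L, hL⟩ := cauchySeq_tendsto_of_complete hcauchy
  have hLnorm : ‖L‖ ≤ 1 / (2 * η) :=
    le_of_tendsto' (hL.norm) (fun k => hxb k)
  -- limit satisfies the equation
  have h1k : Tendsto (fun k : ℕ => 1/((k:ℝ)+1)) atTop (𝓝 0) :=
    tendsto_one_div_add_atTop_nhds_zero_nat
  have hytend : Tendsto (fun k => (c k) • y) atTop (𝓝 y) := by
    have hctend : Tendsto c atTop (𝓝 1) := by
      have := tendsto_const_nhds (x := (1:ℝ)) (f := atTop (α := ℕ)) |>.sub h1k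
      simpa [hc] using this
    simpa using hctend.smul_const y
  have hBtend : Tendsto (fun k => B (x k) (x k)) atTop (𝓝 (B L L)) := by
    have hcont : Continuous (Function.uncurry fun u v : E => B u v) := B.continuous₂
    have := (hcont.tendsto (L, L)).comp (hL.prodMk_nhds hL)
    exact this
  have hLeq : L = y - B L L := by
    refine tendsto_nhds_unique hL ?_
    have h := hytend.sub hBtend
    exact h.congr fun k => (hxeq k).symm
  refine ⟨L, ⟨hLeq, hLnorm⟩, ?_⟩
  rintro x' ⟨h1, h2⟩
  -- any solution is the limit of the approximating sequence
  have hεtend : Tendsto ε atTop (𝓝 0) := by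
    have h2' := (Real.continuous_sqrt.tendsto 0).comp h1k
    rw [Real.sqrt_zero] at h2'
    refine h2'.congr fun k => ?_
    simp only [Function.comp, hε]
    rw [one_div, one_div, Real.sqrt_inv]
  have hb : ∀ k, dist (x k) x' ≤ 2 * ‖y‖ * ε k := by
    intro k
    have hest := quad_diff_est B η hB h1 (hxeq k)
    have hΔ : ‖y - (c k) • y‖ = ‖y‖ * (ε k)^2 := by
      nth_rewrite 1 [show y = (1:ℝ) • y from (one_smul ℝ y).symm]
      rw [← sub_smul, norm_smul, Real.norm_eq_abs, hεsq k]
      simp only [hc]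
      rw [show (1:ℝ) - (1 - 1/((k:ℝ)+1)) = 1/((k:ℝ)+1) by ring,
        abs_of_nonneg (by positivity)]
      ring
    rw [dist_eq_norm, norm_sub_rev]
    set d := ‖x' - x k‖ with hd
    have hd0 : 0 ≤ d := norm_nonneg _
    have hS : η * (‖x'‖ + ‖x k‖) ≤ 1 - ε k / 2 := by
      have hA : η * ‖x'‖ ≤ 1/2 := by
        have := mul_le_mul_of_nonneg_left h2 hη.le
        have h2η : η * (1/(2*η)) = 1/2 := by field_simp
        linarith
      have hBn : η * ‖x k‖ ≤ (1 - ε k)/2 := by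
        have := mul_le_mul_of_nonneg_left (hxnorm k) hη.le
        have h2η : η * ((1 - ε k)/(2*η)) = (1 - ε k)/2 := by field_simp
        linarith
      have := hε0 k
      nlinarith
    rw [hΔ] at hest
    have hkey : (ε k / 2) * d ≤ ‖y‖ * (ε k)^2 := by
      nlinarith [mul_le_mul_of_nonneg_right hS hd0]
    nlinarith [hε0 k, hy0]
  have htendsto : Tendsto x atTop (𝓝 x') := by
    rw [tendsto_iff_dist_tendsto_zero]
    refine squeeze_zero (fun k => dist_nonneg) hb ?_
    have h := hεtend.const_mul (2 * ‖y‖)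
    rw [mul_zero] at h
    exact h
  exact tendsto_nhds_unique htendsto hL
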